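/- With the notation of the reflected wave geometry (x, z+h > 0, r = √(x²+(z+h)²), 0 < V < V_max, c = √(1/V² − 1/V_max²)), the functions q₀(t) = √(t²/r² − 1/V²) (for t ≥ r/V) and q₁(t) = √((t − (z+h)c)²/x² − 1/V_max²) satisfy q₀(t) ≤ q₁(t) for all t in [max(r/V, t_{h₁}), t_{h₂}], where t_{h₁} = (z+h)c + x/V_max and t_{h₂} = r²c/(z+h), provided x/r > V/V_max. -/
import Mathlib


/-- The lower bound `q₀` does not exceed the upper bound `q₁` on the interval
`[max(r/V, t_{h₁}), t_{h₂}]`, in the head-wave region `x/r > V/V_max`. -/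
theorem stmt_16 (x z h V Vmax : ℝ) (hx : 0 < x) (hzh : 0 < z + h)
    (hV : 0 < V) (hVmax : V < Vmax)
    (r c : ℝ) (hr : r = Real.sqrt (x ^ 2 + (z + h) ^ 2))
    (hc : c = Real.sqrt (1 / V ^ 2 - 1 / Vmax ^ 2))
    (q₀ q₁ : ℝ → ℝ)
    (hq₀ : ∀ t, q₀ t = Real.sqrt (t ^ 2 / r ^ 2 - 1 / V ^ 2))
    (hq₁ : ∀ t, q₁ t = Real.sqrt ((t - (z + h) * c) ^ 2 / x ^ 2 - 1 / Vmax ^ 2))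
    (th₁ th₂ : ℝ) (hth₁ : th₁ = (z + h) * c + x / Vmax)
    (hth₂ : th₂ = r ^ 2 * c / (z + h))
    (hreg : x / r > V / Vmax) :
    ∀ t ∈ Set.Icc (max (r / V) th₁) th₂, q₀ t ≤ q₁ t := by
  intro t _
  have hr2 : r ^ 2 = x ^ 2 + (z + h) ^ 2 := by
    rw [hr, Real.sq_sqrt (by positivity)]
  have hrpos : 0 < r ^ 2 := by rw [hr2]; positivity
  have hVmaxpos : 0 < Vmax := lt_trans hV hVmax
  have hc2 : c ^ 2 = 1 / V ^ 2 - 1 / Vmax ^ 2 := by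
    rw [hc, Real.sq_sqrt]
    have : 1 / Vmax ^ 2 ≤ 1 / V ^ 2 := by
      apply one_div_le_one_div_of_le (by positivity)
      exact pow_le_pow_left₀ hV.le hVmax.le 2
    linarith
  rw [hq₀, hq₁]
  apply Real.sqrt_le_sqrt
  have h1 : t ^ 2 / r ^ 2 ≤ ((t - (z + h) * c) ^ 2 + c ^ 2 * x ^ 2) / x ^ 2 := by
    rw [div_le_div_iff₀ hrpos (by positivity)]
    rw [hr2]
    nlinarith [sq_nonneg ((z + h) * t - c * (x ^ 2 + (z + h) ^ 2))]
  have h2 : ((t - (z + h) * c) ^ 2 + c ^ 2 * x ^ 2) / x ^ 2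
      = (t - (z + h) * c) ^ 2 / x ^ 2 + c ^ 2 := by
    field_simp
  rw [h2] at h1
  linarith [hc2 ▸ h1]
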